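/- Let p_1,...,p_m be independent random variables in [0,1] with atomless (continuous) distributions, let H0 ⊆ {1,...,m} with |H0| = m_0 be the set of true nulls, and suppose p_i ~ Uniform(0,1) for every i ∈ H0. Fix α ∈ (0,1) and let R_α := argmax_{k ∈ {0,...,m}} (αk/m − p_(k)), where p_(1) ≤ ... ≤ p_(m) are the order statistics and p_(0) := 0 (the argmax is almost surely unique). Then the boundary false discovery rate of the support-line procedure satisfies P(R_α ≥ 1 and the index i achieving p_i = p_(R_α) lies in H0) = (m_0/m) · α. -/

import Mathlib

open MeasureTheory ProbabilityTheory Filter Set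

/-- The `k`-th order statistic of the values `v 0, ..., v (m-1)`:
`orderStat v 0 = 0`, and for `1 ≤ k ≤ m` it is the `k`-th smallest value. -/
noncomputable def orderStat {m : ℕ} (v : Fin m → ℝ) (k : ℕ) : ℝ :=
  if k = 0 then 0
  else sInf {x : ℝ | k ≤ (Finset.univ.filter (fun i => v i ≤ x)).card}

/-- The support-line objective `k ↦ α k / m − p_(k)`. -/
noncomputable def slObj (α : ℝ) {m : ℕ} (v : Fin m → ℝ) (k : ℕ) : ℝ :=
  α * (k : ℝ) / (m : ℝ) - orderStat v k

/-- The number of rejections `R_α` of the support-line procedure at level `α`: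
a maximizer of the support-line objective over `k ∈ {0, ..., m}`
(the largest one, if there are several; ties are a.s. absent here). -/
noncomputable def slR (α : ℝ) {m : ℕ} (v : Fin m → ℝ) : ℕ :=
  sSup {k : ℕ | k ≤ m ∧ ∀ j ≤ m, slObj α v j ≤ slObj α v k}

/-- The rejection threshold `τ̂_α = p_(R_α)` of the support-line procedure. -/
noncomputable def slTau (α : ℝ) {m : ℕ} (v : Fin m → ℝ) : ℝ :=
  orderStat v (slR α v)

section Sec1
variable {ι : Type*} [Fintype ι]

/-- counting function -/
noncomputable def cnt (v : ι → ℝ) (x : ℝ) : ℕ := (Finset.univ.filter (fun i => v i ≤ x)).card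

noncomputable def genOS (v : ι → ℝ) (k : ℕ) : ℝ :=
  if k = 0 then 0 else sInf {x : ℝ | k ≤ cnt v x}

lemma orderStat_eq_genOS {m : ℕ} (v : Fin m → ℝ) (k : ℕ) : orderStat v k = genOS v k := rfl

lemma cnt_mono (v : ι → ℝ) {x y : ℝ} (h : x ≤ y) : cnt v x ≤ cnt v y := by
  apply Finset.card_le_card
  intro j hj
  simp only [Finset.mem_filter, Finset.mem_univ, true_and] at *
  linarith

lemma cnt_le_card (v : ι → ℝ) (x : ℝ) : cnt v x ≤ Fintype.card ι :=
  le_trans (Finset.card_le_card (Finset.filter_subset _ _)) (le_of_eq (Finset.card_univ))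

lemma one_le_cnt_self (v : ι → ℝ) (i : ι) : 1 ≤ cnt v (v i) := by
  apply Finset.card_pos.mpr
  exact ⟨i, by simp⟩

lemma cnt_strict (v : ι → ℝ) {x : ℝ} {i : ι} (h : x < v i) : cnt v x < cnt v (v i) := by
  apply Finset.card_lt_card
  constructor
  · intro j hj
    simp only [Finset.mem_filter, Finset.mem_univ, true_and] at *
    linarith
  · intro hsub
    have := hsub (by simp : i ∈ Finset.univ.filter (fun j => v j ≤ v i))
    simp only [Finset.mem_filter, Finset.mem_univ, true_and] at this
    linarith

lemma cnt_ge_iff_exists (v : ι → ℝ) (k : ℕ) (x : ℝ) :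
    k ≤ cnt v x ↔ ∃ T ∈ Finset.univ.powersetCard k, ∀ j ∈ T, v j ≤ x := by
  constructor
  · intro h
    obtain ⟨T, hT, hcard⟩ := Finset.exists_subset_card_eq h
    exact ⟨T, Finset.mem_powersetCard.mpr ⟨Finset.subset_univ _, hcard⟩,
      fun j hj => (Finset.mem_filter.mp (hT hj)).2⟩
  · rintro ⟨T, hT, hle⟩
    obtain ⟨-, hcard⟩ := Finset.mem_powersetCard.mp hT
    rw [← hcard]
    exact Finset.card_le_card (fun j hj => Finset.mem_filter.mpr ⟨Finset.mem_univ _, hle j hj⟩)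

lemma cnt_set_nonempty (v : ι → ℝ) {k : ℕ} (hk : k ≤ Fintype.card ι) :
    {x : ℝ | k ≤ cnt v x}.Nonempty := by
  refine ⟨Finset.univ.fold max 0 v, ?_⟩
  have : Finset.univ.filter (fun i => v i ≤ Finset.univ.fold max 0 v) = Finset.univ := by
    apply Finset.filter_true_of_mem
    intro i _
    exact (Finset.le_fold_max _).mpr (Or.inr ⟨i, Finset.mem_univ i, le_refl _⟩)
  simp only [Set.mem_setOf_eq, cnt, this, Finset.card_univ]
  exact hk

lemma cnt_set_bddBelow (v : ι → ℝ) {k : ℕ} (hk : 1 ≤ k) :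
    BddBelow {x : ℝ | k ≤ cnt v x} := by
  refine ⟨Finset.univ.fold min 0 v, ?_⟩
  intro x hx
  have hpos : 0 < cnt v x := lt_of_lt_of_le hk hx
  obtain ⟨j, hj⟩ := Finset.card_pos.mp hpos
  simp only [Finset.mem_filter, Finset.mem_univ, true_and] at hj
  exact le_trans ((Finset.fold_min_le _).mpr (Or.inr ⟨j, Finset.mem_univ j, le_refl _⟩)) hj

lemma genOS_mem (v : ι → ℝ) {k : ℕ} (hk : 1 ≤ k) (hk2 : k ≤ Fintype.card ι) :
    k ≤ cnt v (genOS v k) := by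
  have hk0 : k ≠ 0 := by omega
  rw [genOS, if_neg hk0]
  set S := {x : ℝ | k ≤ cnt v x} with hS
  set c := sInf S with hc
  -- gap
  set ε := Finset.univ.fold min 1 (fun j => if c < v j then v j - c else 1) with hε
  have hεpos : 0 < ε := by
    rw [hε]
    refine (Finset.lt_fold_min _).mpr ⟨one_pos, fun j _ => ?_⟩
    by_cases hj : c < v j
    · rw [if_pos hj]; linarith
    · rw [if_neg hj]; exact one_pos
  have hεle : ∀ j : ι, c < v j → ε ≤ v j - c := by
    intro j hj
    refine le_trans ((Finset.fold_min_le _).mpr (Or.inr ⟨j, Finset.mem_univ j, le_refl _⟩)) ?_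
    rw [if_pos hj]
  obtain ⟨x, hxS, hxlt⟩ : ∃ x ∈ S, x < c + ε := by
    refine (csInf_lt_iff (cnt_set_bddBelow v hk) (cnt_set_nonempty v hk2)).mp ?_
    rw [← hc]; linarith
  refine le_trans hxS (Finset.card_le_card ?_)
  intro j hj
  simp only [Finset.mem_filter, Finset.mem_univ, true_and] at *
  by_contra hcj
  push_neg at hcj
  have := hεle j hcj
  linarith

end Sec1

section Sec1b
variable {ι : Type*} [Fintype ι]

lemma cnt_ge_iff (v : ι → ℝ) {k : ℕ} (hk : 1 ≤ k) (hk2 : k ≤ Fintype.card ι) (x : ℝ) :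
    k ≤ cnt v x ↔ genOS v k ≤ x := by
  constructor
  · intro h
    rw [genOS, if_neg (by omega : k ≠ 0)]
    exact csInf_le (cnt_set_bddBelow v hk) h
  · intro h
    exact le_trans (genOS_mem v hk hk2) (cnt_mono v h)

lemma genOS_cnt_self (v : ι → ℝ) (i : ι) : genOS v (cnt v (v i)) = v i := by
  have hk : 1 ≤ cnt v (v i) := one_le_cnt_self v i
  have hk2 := cnt_le_card v (v i)
  refine le_antisymm ((cnt_ge_iff v hk hk2 (v i)).mp (le_refl _)) ?_
  by_contra hlt
  push_neg at hlt
  have h1 := genOS_mem v hk hk2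
  have h2 := cnt_strict v hlt
  omega

lemma cnt_self_inj (v : ι → ℝ) {i j : ι} (h : cnt v (v i) = cnt v (v j)) : v i = v j := by
  have h1 := genOS_cnt_self v i
  have h2 := genOS_cnt_self v j
  rw [h] at h1
  rw [← h1, h2]

lemma cnt_surj (v : ι → ℝ) (hv : Function.Injective v) {k : ℕ} (hk : 1 ≤ k)
    (hk2 : k ≤ Fintype.card ι) : ∃ i, cnt v (v i) = k := by
  have hinj : Function.Injective (fun i => cnt v (v i)) := by
    intro i j hij
    exact hv (cnt_self_inj v hij)
  have hsub : Finset.univ.image (fun i => cnt v (v i)) ⊆ Finset.Icc 1 (Fintype.card ι) := by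
    intro n hn
    obtain ⟨i, _, rfl⟩ := Finset.mem_image.mp hn
    exact Finset.mem_Icc.mpr ⟨one_le_cnt_self v i, cnt_le_card v (v i)⟩
  have hcard : (Finset.Icc 1 (Fintype.card ι)).card ≤
      (Finset.univ.image (fun i => cnt v (v i))).card := by
    rw [Finset.card_image_of_injective _ hinj, Finset.card_univ, Nat.card_Icc]
    omega
  have := Finset.eq_of_subset_of_card_le hsub hcard
  have hmem : k ∈ Finset.univ.image (fun i => cnt v (v i)) := by
    rw [this]
    exact Finset.mem_Icc.mpr ⟨hk, hk2⟩
  obtain ⟨i, _, hi⟩ := Finset.mem_image.mp hmem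
  exact ⟨i, hi⟩

end Sec1b
section Sec2
variable {m : ℕ}

-- `phi α v x = α * cnt v x / m - x`, the support-line objective as a function of a value
noncomputable def phi (α : ℝ) {m : ℕ} (v : Fin m → ℝ) (x : ℝ) : ℝ :=
  α * (cnt v x : ℝ) / (m : ℝ) - x

lemma card_fin (m : ℕ) : Fintype.card (Fin m) = m := Fintype.card_fin m

lemma cnt_self_le (v : Fin m → ℝ) (i : Fin m) : cnt v (v i) ≤ m := by
  have := cnt_le_card v (v i); rwa [card_fin] at this

lemma slObj_zero (α : ℝ) (v : Fin m → ℝ) : slObj α v 0 = 0 := by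
  simp [slObj, orderStat]

lemma slObj_cnt (α : ℝ) (v : Fin m → ℝ) (i : Fin m) :
    slObj α v (cnt v (v i)) = phi α v (v i) := by
  rw [slObj, phi, orderStat_eq_genOS, genOS_cnt_self]

lemma slObj_of_cnt_eq (α : ℝ) (v : Fin m → ℝ) {i : Fin m} {k : ℕ}
    (h : cnt v (v i) = k) : slObj α v k = phi α v (v i) := by
  rw [← h, slObj_cnt]

/-- The argmax set of the support-line objective. -/
def slSet (α : ℝ) (v : Fin m → ℝ) : Set ℕ :=
  {k : ℕ | k ≤ m ∧ ∀ j ≤ m, slObj α v j ≤ slObj α v k}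

lemma slR_def (α : ℝ) (v : Fin m → ℝ) : slR α v = sSup (slSet α v) := rfl

lemma slSet_nonempty (α : ℝ) (v : Fin m → ℝ) : (slSet α v).Nonempty := by
  obtain ⟨k₀, hk₀mem, hk₀max⟩ := Finset.exists_max_image (Finset.range (m + 1)) (slObj α v)
    ⟨0, Finset.mem_range.mpr (Nat.succ_pos m)⟩
  refine ⟨k₀, Nat.lt_succ_iff.mp (Finset.mem_range.mp hk₀mem), fun j hj => ?_⟩
  exact hk₀max j (Finset.mem_range.mpr (Nat.lt_succ_of_le hj))

lemma slSet_bddAbove (α : ℝ) (v : Fin m → ℝ) : BddAbove (slSet α v) :=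
  ⟨m, fun _ hk => hk.1⟩

lemma slR_mem (α : ℝ) (v : Fin m → ℝ) : slR α v ∈ slSet α v :=
  Nat.sSup_mem (slSet_nonempty α v) (slSet_bddAbove α v)

lemma slR_eq_of_strict (α : ℝ) {v : Fin m → ℝ} (hv : Function.Injective v) {i : Fin m}
    (hpos : 0 < phi α v (v i))
    (hmax : ∀ j, j ≠ i → phi α v (v j) < phi α v (v i)) :
    slR α v = cnt v (v i) ∧ slTau α v = v i := by
  set k₀ := cnt v (v i) with hk₀
  have hk₀m : k₀ ≤ m := cnt_self_le v i
  have hobj : slObj α v k₀ = phi α v (v i) := slObj_cnt α v i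
  have hub : ∀ j ≤ m, slObj α v j ≤ slObj α v k₀ := by
    intro j hj
    rcases Nat.eq_zero_or_pos j with rfl | hj1
    · rw [slObj_zero, hobj]; linarith
    · obtain ⟨jj, hjj⟩ := cnt_surj v hv hj1 (by rwa [card_fin])
      rw [slObj_of_cnt_eq α v hjj, hobj]
      rcases eq_or_ne jj i with rfl | hne
      · exact le_refl _
      · exact le_of_lt (hmax jj hne)
  have hset : slSet α v = {k₀} := by
    apply Set.eq_singleton_iff_unique_mem.mpr
    refine ⟨⟨hk₀m, hub⟩, ?_⟩
    rintro k ⟨hkm, hkmax⟩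
    have h1 : slObj α v k₀ ≤ slObj α v k := hkmax k₀ hk₀m
    have h2 : slObj α v k ≤ slObj α v k₀ := hub k hkm
    have heq : slObj α v k = slObj α v k₀ := le_antisymm h2 h1
    rcases Nat.eq_zero_or_pos k with rfl | hk1
    · rw [slObj_zero, hobj] at heq; linarith
    · obtain ⟨jj, hjj⟩ := cnt_surj v hv hk1 (by rwa [card_fin])
      rw [slObj_of_cnt_eq α v hjj, hobj] at heq
      rcases eq_or_ne jj i with rfl | hne
      · omega
      · exact absurd heq (ne_of_lt (hmax jj hne))
  have hR : slR α v = k₀ := by rw [slR_def, hset, csSup_singleton]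
  refine ⟨hR, ?_⟩
  rw [slTau, hR, hk₀, orderStat_eq_genOS, genOS_cnt_self]

lemma weak_of_event (α : ℝ) {v : Fin m → ℝ} (hv : Function.Injective v) {i : Fin m}
    (h1 : 1 ≤ slR α v) (h2 : v i = slTau α v) :
    0 ≤ phi α v (v i) ∧ ∀ j, phi α v (v j) ≤ phi α v (v i) := by
  obtain ⟨hRm, hRmax⟩ := slR_mem α v
  set R := slR α v with hR
  obtain ⟨jR, hjR⟩ := cnt_surj v hv h1 (by rwa [card_fin])
  have htau : slTau α v = v jR := by
    rw [slTau, ← hR, ← hjR, orderStat_eq_genOS, genOS_cnt_self]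
  have hij : i = jR := hv (by rw [h2, htau])
  have hcnt : cnt v (v i) = R := by rw [hij]; exact hjR
  have hobj : slObj α v R = phi α v (v i) := slObj_of_cnt_eq α v hcnt
  constructor
  · have := hRmax 0 (Nat.zero_le m)
    rwa [slObj_zero, hobj] at this
  · intro j
    have := hRmax (cnt v (v j)) (cnt_self_le v j)
    rwa [slObj_cnt, hobj] at this

end Sec2
section Sec3
variable {m : ℕ} (i : Fin m)

/-- Insert value `t` at coordinate `i`, other coordinates given by `w`. -/
noncomputable def expand (i : Fin m) (w : {j : Fin m // j ≠ i} → ℝ) (t : ℝ) : Fin m → ℝ :=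
  fun j => if h : j = i then t else w ⟨j, h⟩

lemma expand_self (w : {j : Fin m // j ≠ i} → ℝ) (t : ℝ) : expand i w t i = t := by
  simp [expand]

lemma expand_other (w : {j : Fin m // j ≠ i} → ℝ) (t : ℝ) (j : {j : Fin m // j ≠ i}) :
    expand i w t (j : Fin m) = w j := by
  simp [expand, j.2]

lemma card_ne (i : Fin m) : Fintype.card {j : Fin m // j ≠ i} = m - 1 := by
  simp [Fintype.card_subtype_compl, Fintype.card_fin]

lemma filter_card_split (P : Fin m → Prop) [DecidablePred P] :
    (Finset.univ.filter P).card
      = (Finset.univ.filter (fun j : {j : Fin m // j ≠ i} => P j)).card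
        + (if P i then 1 else 0) := by
  classical
  have h1 : Finset.univ.filter P
      = if P i then insert i ((Finset.univ.erase i).filter P)
        else (Finset.univ.erase i).filter P := by
    split_ifs with h
    · rw [Finset.filter_erase, Finset.insert_erase]
      exact Finset.mem_filter.mpr ⟨Finset.mem_univ i, h⟩
    · rw [Finset.filter_erase, Finset.erase_eq_of_notMem]
      intro hmem
      exact h (Finset.mem_filter.mp hmem).2
  have h2 : ((Finset.univ.erase i).filter P).card
      = (Finset.univ.filter (fun j : {j : Fin m // j ≠ i} => P j)).card := by
    apply Finset.card_bij (fun (j : Fin m) (hj : j ∈ (Finset.univ.erase i).filter P) =>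
      (⟨j, (Finset.mem_erase.mp (Finset.mem_filter.mp hj).1).1⟩ : {j : Fin m // j ≠ i}))
    · intro a ha
      simp only [Finset.mem_filter, Finset.mem_univ, true_and]
      exact (Finset.mem_filter.mp ha).2
    · intro a ha b hb hab
      simpa using congrArg Subtype.val hab
    · intro b hb
      refine ⟨(b : Fin m), Finset.mem_filter.mpr ⟨Finset.mem_erase.mpr ⟨b.2, Finset.mem_univ _⟩,
        (Finset.mem_filter.mp hb).2⟩, ?_⟩
      simp
  split_ifs with h
  · rw [h1, if_pos h, Finset.card_insert_of_notMem (by simp), h2]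
  · rw [h1, if_neg h, h2, Nat.add_zero]

lemma cnt_expand (w : {j : Fin m // j ≠ i} → ℝ) (t x : ℝ) :
    cnt (expand i w t) x = cnt w x + (if t ≤ x then 1 else 0) := by
  classical
  rw [cnt, filter_card_split i (fun j => expand i w t j ≤ x)]
  congr 1
  · rw [cnt]
    apply Finset.card_bij (fun a _ => a)
    · intro a ha
      simp only [Finset.mem_filter, Finset.mem_univ, true_and] at *
      rwa [expand_other] at ha
    · intro a b _ _ h
      exact h
    · intro b hb
      refine ⟨b, ?_, rfl⟩
      simp only [Finset.mem_filter, Finset.mem_univ, true_and] at *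
      rwa [expand_other]
  · rw [expand_self]

end Sec3
section Sec3b
variable {m : ℕ} {i : Fin m} {w : {j : Fin m // j ≠ i} → ℝ} {α : ℝ}

noncomputable def qq (w : {j : Fin m // j ≠ i} → ℝ) (r : ℕ) : ℝ := genOS w r

noncomputable def qtop (w : {j : Fin m // j ≠ i} → ℝ) (r : ℕ) : ℝ :=
  if r = m then 1 else genOS w r

lemma qq_zero : qq w 0 = 0 := by simp [qq, genOS]

lemma NN_le (j : {j : Fin m // j ≠ i}) : cnt w (w j) ≤ m - 1 := by
  have := cnt_le_card w (w j); rwa [card_ne] at this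

lemma NN_pos (j : {j : Fin m // j ≠ i}) : 1 ≤ cnt w (w j) := one_le_cnt_self w j

lemma qq_eq_w (hw : Function.Injective w) {r : ℕ} (h1 : 1 ≤ r) (h2 : r ≤ m - 1) :
    ∃ j, cnt w (w j) = r ∧ qq w r = w j := by
  obtain ⟨j, hj⟩ := cnt_surj w hw h1 (by rwa [card_ne])
  exact ⟨j, hj, by rw [qq, ← hj, genOS_cnt_self]⟩

lemma qq_mem01 (hw : Function.Injective w) (hw01 : ∀ j, w j ∈ Set.Ioo (0:ℝ) 1) {r : ℕ}
    (h2 : r ≤ m - 1) : qq w r ∈ Set.Ico (0:ℝ) 1 := by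
  rcases Nat.eq_zero_or_pos r with rfl | h1
  · rw [qq_zero]; exact ⟨le_refl _, one_pos⟩
  · obtain ⟨j, _, hj⟩ := qq_eq_w hw h1 h2
    rw [hj]
    exact ⟨le_of_lt (hw01 j).1, (hw01 j).2⟩

lemma qq_le_cnt_iff (hw : Function.Injective w) {r : ℕ} (h1 : 1 ≤ r) (h2 : r ≤ m - 1) (x : ℝ) :
    qq w r ≤ x ↔ r ≤ cnt w x := (cnt_ge_iff w h1 (by rwa [card_ne]) x).symm

lemma qq_mono (hw : Function.Injective w) (hw01 : ∀ j, w j ∈ Set.Ioo (0:ℝ) 1) {r s : ℕ}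
    (hrs : r ≤ s) (h2 : s ≤ m - 1) : qq w r ≤ qq w s := by
  rcases Nat.eq_zero_or_pos r with rfl | h1
  · rw [qq_zero]; exact (qq_mem01 hw hw01 h2).1
  · rw [qq_le_cnt_iff hw h1 (le_trans hrs h2)]
    exact le_trans hrs (genOS_mem w (le_trans h1 hrs) (by rwa [card_ne]))

variable {t : ℝ} {r : ℕ}

lemma slot_cnt (hw : Function.Injective w) (hr1 : 1 ≤ r) (hrm : r ≤ m)
    (ht1 : qq w (r-1) < t) (ht2 : t < qtop w r) : cnt w t = r - 1 := by
  have hub : cnt w t ≤ m - 1 := by have := cnt_le_card w t; rwa [card_ne] at this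
  have hge : r - 1 ≤ cnt w t := by
    rcases Nat.eq_zero_or_pos (r-1) with h | h
    · omega
    · exact (qq_le_cnt_iff hw h (by omega) t).mp (le_of_lt ht1)
  have hlt : cnt w t < r := by
    by_contra hc
    push_neg at hc
    rcases eq_or_ne r m with rfl | hne
    · omega
    · have hrn : r ≤ m - 1 := by omega
      have := (qq_le_cnt_iff hw hr1 hrn t).mpr hc
      rw [qtop, if_neg hne] at ht2
      change genOS w r ≤ t at this
      have : qq w r ≤ t := this
      linarith
  omega

lemma slot_not_range (hw : Function.Injective w) (hr1 : 1 ≤ r) (hrm : r ≤ m)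
    (ht1 : qq w (r-1) < t) (ht2 : t < qtop w r) : ∀ j, w j ≠ t := by
  intro j hj
  have h1 := slot_cnt hw hr1 hrm ht1 ht2
  have h2 : cnt w (w j) = r - 1 := by rw [hj, h1]
  have h3 : 1 ≤ r - 1 := le_trans (NN_pos j) (le_of_eq h2)
  have : qq w (r-1) = w j := by rw [qq, ← h2, genOS_cnt_self]
  rw [this] at ht1
  rw [hj] at ht1
  exact lt_irrefl t ht1

lemma slot_le_iff (hw : Function.Injective w) (hr1 : 1 ≤ r) (hrm : r ≤ m)
    (ht1 : qq w (r-1) < t) (ht2 : t < qtop w r) (j : {j : Fin m // j ≠ i}) :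
    (t ≤ w j ↔ r ≤ cnt w (w j)) := by
  have hcnt := slot_cnt hw hr1 hrm ht1 ht2
  constructor
  · intro h
    have hne := slot_not_range hw hr1 hrm ht1 ht2 j
    have hlt : t < w j := lt_of_le_of_ne h (fun hh => hne hh.symm)
    have := cnt_strict w hlt
    omega
  · intro h
    by_contra hc
    push_neg at hc
    have := cnt_mono w (le_of_lt hc)
    omega

lemma slot_expand_inj (hw : Function.Injective w) (hr1 : 1 ≤ r) (hrm : r ≤ m)
    (ht1 : qq w (r-1) < t) (ht2 : t < qtop w r) : Function.Injective (expand i w t) := by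
  have hnr := slot_not_range hw hr1 hrm ht1 ht2
  intro a b hab
  have key : ∀ c (hc : ¬ c = i), expand i w t c = w ⟨c, hc⟩ := fun c hc =>
    expand_other i w t ⟨c, hc⟩
  by_cases ha : a = i <;> by_cases hb : b = i
  · rw [ha, hb]
  · exfalso
    rw [ha, expand_self, key b hb] at hab
    exact hnr ⟨b, hb⟩ hab.symm
  · exfalso
    rw [hb, expand_self, key a ha] at hab
    exact hnr ⟨a, ha⟩ hab
  · rw [key a ha, key b hb] at hab
    simpa using congrArg Subtype.val (hw hab)

end Sec3b
section Sec3c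
variable {m : ℕ} {i : Fin m} {w : {j : Fin m // j ≠ i} → ℝ} {α : ℝ} {t : ℝ} {r : ℕ}

noncomputable def DD (α : ℝ) (w : {j : Fin m // j ≠ i} → ℝ) (r : ℕ) : ℝ :=
  Finset.univ.fold max 0
    (fun j => α * ((cnt w (w j) : ℝ) + if r ≤ cnt w (w j) then 1 else 0) / m - w j)

lemma DD_nonneg : 0 ≤ DD α w r := (Finset.le_fold_max _).mpr (Or.inl (le_refl _))

lemma DD_term_le (j : {j : Fin m // j ≠ i}) :
    α * ((cnt w (w j) : ℝ) + if r ≤ cnt w (w j) then 1 else 0) / m - w j ≤ DD α w r :=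
  (Finset.le_fold_max _).mpr (Or.inr ⟨j, Finset.mem_univ j, le_refl _⟩)

lemma slot_cnt_expand_self (hw : Function.Injective w) (hr1 : 1 ≤ r) (hrm : r ≤ m)
    (ht1 : qq w (r-1) < t) (ht2 : t < qtop w r) : cnt (expand i w t) t = r := by
  rw [cnt_expand, if_pos (le_refl t), slot_cnt hw hr1 hrm ht1 ht2]
  omega

lemma slot_phi_self (hw : Function.Injective w) (hr1 : 1 ≤ r) (hrm : r ≤ m)
    (ht1 : qq w (r-1) < t) (ht2 : t < qtop w r) :
    phi α (expand i w t) t = α * r / m - t := by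
  rw [phi, slot_cnt_expand_self hw hr1 hrm ht1 ht2]

lemma slot_phi_other (hw : Function.Injective w) (hr1 : 1 ≤ r) (hrm : r ≤ m)
    (ht1 : qq w (r-1) < t) (ht2 : t < qtop w r) (j : {j : Fin m // j ≠ i}) :
    phi α (expand i w t) (w j)
      = α * ((cnt w (w j) : ℝ) + if r ≤ cnt w (w j) then 1 else 0) / m - w j := by
  rw [phi, cnt_expand]
  have : (if t ≤ w j then 1 else 0) = (if r ≤ cnt w (w j) then (1:ℕ) else 0) := by
    rcases (slot_le_iff hw hr1 hrm ht1 ht2 j) with ⟨h1, h2⟩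
    by_cases h : t ≤ w j
    · rw [if_pos h, if_pos (h1 h)]
    · rw [if_neg h, if_neg (fun hc => h (h2 hc))]
  rw [this]
  push_cast
  split_ifs <;> push_cast <;> ring

lemma slot_event_of_strict (hw : Function.Injective w) (hr1 : 1 ≤ r) (hrm : r ≤ m)
    (ht1 : qq w (r-1) < t) (ht2 : t < qtop w r) (hD : DD α w r < α * r / m - t) :
    1 ≤ slR α (expand i w t) ∧ expand i w t i = slTau α (expand i w t) := by
  set v := expand i w t with hv
  have hvi : v i = t := expand_self i w t
  have hinj := slot_expand_inj hw hr1 hrm ht1 ht2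
  have hpos : 0 < phi α v (v i) := by
    rw [hvi, slot_phi_self hw hr1 hrm ht1 ht2]
    have := DD_nonneg (α := α) (w := w) (r := r)
    linarith
  have hmax : ∀ j, j ≠ i → phi α v (v j) < phi α v (v i) := by
    intro j hj
    rw [hvi, slot_phi_self hw hr1 hrm ht1 ht2,
      show v j = w ⟨j, hj⟩ from expand_other i w t ⟨j, hj⟩,
      slot_phi_other hw hr1 hrm ht1 ht2 ⟨j, hj⟩]
    exact lt_of_le_of_lt (DD_term_le ⟨j, hj⟩) hD
  obtain ⟨hR, hTau⟩ := slR_eq_of_strict α hinj hpos hmax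
  refine ⟨?_, ?_⟩
  · rw [hR, show expand i w t i = t from expand_self i w t,
      slot_cnt_expand_self hw hr1 hrm ht1 ht2]
    exact hr1
  · rw [hTau]

lemma slot_weak_of_event (hw : Function.Injective w) (hr1 : 1 ≤ r) (hrm : r ≤ m)
    (ht1 : qq w (r-1) < t) (ht2 : t < qtop w r)
    (h1 : 1 ≤ slR α (expand i w t)) (h2 : expand i w t i = slTau α (expand i w t)) :
    t ≤ α * r / m - DD α w r := by
  set v := expand i w t with hv
  have hvi : v i = t := expand_self i w t
  have hinj := slot_expand_inj hw hr1 hrm ht1 ht2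
  obtain ⟨hw0, hwmax⟩ := weak_of_event α hinj h1 h2
  rw [show expand i w t i = t from expand_self i w t,
    slot_phi_self hw hr1 hrm ht1 ht2] at hw0 hwmax
  have hDle : DD α w r ≤ α * r / m - t := by
    refine (Finset.fold_max_le _).mpr ⟨hw0, fun j _ => ?_⟩
    have := hwmax (j : Fin m)
    rwa [show expand i w t (j : Fin m) = w j from expand_other i w t j,
      slot_phi_other hw hr1 hrm ht1 ht2 j] at this
  linarith

end Sec3c
section Sec4

lemma fold_max_base {β : Type*} (s : Finset β) (b c : ℝ) (f : β → ℝ) :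
    s.fold max (max b c) f = max b (s.fold max c f) := by
  induction s using Finset.cons_induction with
  | empty => rfl
  | cons a s ha ih => rw [Finset.fold_cons, Finset.fold_cons, ih, max_left_comm]

lemma real3 (K C a b : ℝ) (hab : a ≤ b) :
    max (K - a) C - max (K - b) C = max 0 (min b (K - C) - a) := by
  rcases le_total (K - C) a with h1 | h1 <;> rcases le_total (K - C) b with h2 | h2 <;>
    simp only [max_def, min_def] <;> split_ifs <;> linarith

variable {m : ℕ} {i : Fin m} {w : {j : Fin m // j ≠ i} → ℝ} {α : ℝ}

noncomputable def FF (α : ℝ) (w : {j : Fin m // j ≠ i} → ℝ) (r : ℕ) : ℝ :=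
  if r = m then max (α * m / m - 1) (DD α w m)
  else max (α * ((r : ℝ) + 1) / m - qq w r) (DD α w (r+1))

lemma swapD (hw : Function.Injective w) {r : ℕ} (h1 : 1 ≤ r) (h2 : r ≤ m - 1) :
    max (α * ((r : ℝ) + 1) / m - qq w r) (DD α w (r+1))
      = max (α * r / m - qq w r) (DD α w r) := by
  classical
  obtain ⟨jr, hjr, hq⟩ := qq_eq_w hw h1 h2
  have hsplit : ∀ s : ℕ, DD α w s
      = max (α * ((cnt w (w jr) : ℝ) + if s ≤ cnt w (w jr) then 1 else 0) / m - w jr)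
        ((Finset.univ.erase jr).fold max 0
          (fun j => α * ((cnt w (w j) : ℝ) + if s ≤ cnt w (w j) then 1 else 0) / m - w j)) := by
    intro s
    have huniv : (Finset.univ : Finset {j : Fin m // j ≠ i})
        = insert jr (Finset.univ.erase jr) := (Finset.insert_erase (Finset.mem_univ jr)).symm
    rw [DD]
    conv_lhs => rw [huniv]
    rw [Finset.fold_insert (Finset.notMem_erase jr _)]
  have hX : (Finset.univ.erase jr).fold max 0
        (fun j => α * ((cnt w (w j) : ℝ) + if r+1 ≤ cnt w (w j) then 1 else 0) / m - w j)
      = (Finset.univ.erase jr).fold max 0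
        (fun j => α * ((cnt w (w j) : ℝ) + if r ≤ cnt w (w j) then 1 else 0) / m - w j) := by
    apply Finset.fold_congr
    intro j hj
    have hne : cnt w (w j) ≠ r := by
      intro hc
      have : w j = w jr := cnt_self_inj w (by rw [hc, hjr])
      exact Finset.ne_of_mem_erase hj (hw this)
    have hiff : (r+1 ≤ cnt w (w j)) ↔ (r ≤ cnt w (w j)) := by omega
    rw [if_congr hiff rfl rfl]
  have hjr_t : α * ((cnt w (w jr) : ℝ) + if r+1 ≤ cnt w (w jr) then 1 else 0) / m - w jr
      = α * r / m - qq w r := by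
    rw [hjr, if_neg (by omega), hq]
    push_cast
    ring
  have hjr_s : α * ((cnt w (w jr) : ℝ) + if r ≤ cnt w (w jr) then 1 else 0) / m - w jr
      = α * ((r : ℝ) + 1) / m - qq w r := by
    rw [hjr, if_pos (le_refl r), hq]
  rw [hsplit (r+1), hsplit r, hX, hjr_t, hjr_s, max_left_comm]

lemma FF_slot_pred (hw : Function.Injective w) {r : ℕ} (h1 : 1 ≤ r) (hrm : r ≤ m) :
    FF α w (r-1) = max (α * r / m - qq w (r-1)) (DD α w r) := by
  have hne : r - 1 ≠ m := by omega
  rw [FF, if_neg hne]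
  have h3 : ((r-1 : ℕ) : ℝ) + 1 = (r : ℝ) := by
    rw [Nat.cast_sub h1]
    push_cast
    ring
  rw [h3, Nat.sub_add_cancel h1]

lemma FF_slot_self (hw : Function.Injective w) (hw01 : ∀ j, w j ∈ Set.Ioo (0:ℝ) 1)
    {r : ℕ} (h1 : 1 ≤ r) (hrm : r ≤ m) :
    FF α w r = max (α * r / m - qtop w r) (DD α w r) := by
  rcases eq_or_ne r m with rfl | hne
  · rw [FF, if_pos rfl, qtop, if_pos rfl]
  · rw [FF, if_neg hne, qtop, if_neg hne]
    exact swapD hw h1 (by omega)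

lemma ell_eq (hw : Function.Injective w) (hw01 : ∀ j, w j ∈ Set.Ioo (0:ℝ) 1)
    (hm : 0 < m) {r : ℕ} (h1 : 1 ≤ r) (hrm : r ≤ m) :
    max 0 (min (qtop w r) (α * r / m - DD α w r) - qq w (r-1))
      = FF α w (r-1) - FF α w r := by
  have hab : qq w (r-1) ≤ qtop w r := by
    rcases eq_or_ne r m with rfl | hne
    · rw [qtop, if_pos rfl]
      exact le_of_lt (qq_mem01 hw hw01 (by omega)).2
    · rw [qtop, if_neg hne]
      exact qq_mono hw hw01 (by omega) (by omega)
  rw [FF_slot_pred hw h1 hrm, FF_slot_self hw hw01 h1 hrm, real3 _ _ _ _ hab]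

lemma FF_zero (hm : 0 < m) (hα1 : 0 < α) :
    FF α w 0 = α / m + Finset.univ.fold max 0 (fun j => α * (cnt w (w j) : ℝ) / m - w j) := by
  have hne : (0:ℕ) ≠ m := by omega
  rw [FF, if_neg hne, qq_zero]
  have hD1 : DD α w 1 = Finset.univ.fold max 0
      (fun j => (α * (cnt w (w j) : ℝ) / m - w j) + α / m) := by
    rw [DD]
    apply Finset.fold_congr
    intro j _
    rw [if_pos (NN_pos j)]
    push_cast
    ring
  have hhom : Finset.univ.fold max ((0:ℝ) + α/m)
      (fun j => (α * (cnt w (w j) : ℝ) / m - w j) + α / m)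
      = Finset.univ.fold max 0 (fun j => α * (cnt w (w j) : ℝ) / m - w j) + α / m := by
    exact Finset.fold_hom (op := max) (op' := max) (m := fun x : ℝ => x + α/m)
      (fun x y => (max_add_add_right x y (α/m)).symm)
  have hαm : 0 < α / m := by positivity
  calc max (α * (((0:ℕ):ℝ) + 1) / m - 0) (DD α w (0+1))
      = max (α/m) (DD α w 1) := by norm_num
    _ = Finset.univ.fold max (max (α/m) 0)
        (fun j => (α * (cnt w (w j) : ℝ) / m - w j) + α / m) := by
        rw [hD1, fold_max_base]
    _ = Finset.univ.fold max ((0:ℝ) + α/m)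
        (fun j => (α * (cnt w (w j) : ℝ) / m - w j) + α / m) := by
        rw [show ((α/m : ℝ) ⊔ 0) = 0 + α/m by rw [zero_add, max_eq_left (le_of_lt hαm)]]
    _ = _ := by rw [hhom, add_comm]

lemma FF_m (hm : 0 < m) (hα2 : α < 1) :
    FF α w m = Finset.univ.fold max 0 (fun j => α * (cnt w (w j) : ℝ) / m - w j) := by
  rw [FF, if_pos rfl]
  have hDm : DD α w m = Finset.univ.fold max 0
      (fun j => α * (cnt w (w j) : ℝ) / m - w j) := by
    rw [DD]
    apply Finset.fold_congr
    intro j _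
    have : ¬ (m ≤ cnt w (w j)) := by have := NN_le (w := w) j; omega
    rw [if_neg this]
    norm_num
  have h1 : α * m / m - 1 = α - 1 := by
    rw [mul_div_assoc, div_self (by positivity : (m:ℝ) ≠ 0), mul_one]
  have h2 : (0:ℝ) ≤ Finset.univ.fold max 0 (fun j => α * (cnt w (w j) : ℝ) / m - w j) :=
    (Finset.le_fold_max _).mpr (Or.inl (le_refl _))
  rw [hDm, h1, max_eq_right (by linarith)]

lemma telescope (hw : Function.Injective w) (hw01 : ∀ j, w j ∈ Set.Ioo (0:ℝ) 1)
    (hm : 0 < m) (hα1 : 0 < α) (hα2 : α < 1) :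
    ∑ r ∈ Finset.range m,
      max 0 (min (qtop w (r+1)) (α * (r+1) / m - DD α w (r+1)) - qq w r)
      = α / m := by
  have : ∀ r ∈ Finset.range m,
      max 0 (min (qtop w (r+1)) (α * (r+1) / m - DD α w (r+1)) - qq w r)
      = FF α w r - FF α w (r+1) := by
    intro r hr
    have hrm : r + 1 ≤ m := Finset.mem_range.mp hr
    have := ell_eq (α := α) hw hw01 hm (Nat.le_add_left 1 r) hrm
    rw [Nat.add_sub_cancel] at this
    rw [← this]
    norm_num
  rw [Finset.sum_congr rfl this, Finset.sum_range_sub' (FF α w), FF_zero hm hα1, FF_m hm hα2]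
  ring

end Sec4
section Sec5
variable {m : ℕ} {i : Fin m} {w : {j : Fin m // j ≠ i} → ℝ} {α : ℝ}

lemma qtop_le_one (hw : Function.Injective w) (hw01 : ∀ j, w j ∈ Set.Ioo (0:ℝ) 1)
    {r : ℕ} (hrm : r ≤ m) : qtop w r ≤ 1 := by
  rcases eq_or_ne r m with rfl | hne
  · rw [qtop, if_pos rfl]
  · rw [qtop, if_neg hne]
    exact le_of_lt (qq_mem01 hw hw01 (by omega) (r := r)).2

lemma ofReal_max_zero (x : ℝ) : ENNReal.ofReal (max 0 x) = ENNReal.ofReal x := by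
  rcases le_total x 0 with h | h
  · rw [max_eq_left h, ENNReal.ofReal_zero, ENNReal.ofReal_of_nonpos h]
  · rw [max_eq_right h]

lemma core_slice (hm : 0 < m) (hα1 : 0 < α) (hα2 : α < 1)
    (hw : Function.Injective w) (hw01 : ∀ j, w j ∈ Set.Ioo (0:ℝ) 1) :
    volume ({t : ℝ | 1 ≤ slR α (expand i w t) ∧ expand i w t i = slTau α (expand i w t)}
      ∩ Set.Icc 0 1) = ENNReal.ofReal (α / m) := by
  classical
  set A := {t : ℝ | 1 ≤ slR α (expand i w t) ∧ expand i w t i = slTau α (expand i w t)}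
    ∩ Set.Icc 0 1 with hA
  set δ : ℕ → ℝ := fun r => min (qtop w (r+1)) (α * (r+1) / m - DD α w (r+1)) - qq w r with hδ
  set U : ℕ → Set ℝ := fun r => Set.Ioo (qq w r) (min (qtop w (r+1)) (α * (r+1) / m - DD α w (r+1)))
    with hU
  set V : ℕ → Set ℝ := fun r => Set.Icc (qq w r) (min (qtop w (r+1)) (α * (r+1) / m - DD α w (r+1)))
    with hV
  -- (1) U r ⊆ A
  have hUA : ∀ r, r < m → U r ⊆ A := by
    intro r hr t ht
    have h1 : 1 ≤ r + 1 := le_add_self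
    have h2 : r + 1 ≤ m := hr
    have ht1 : qq w ((r+1)-1) < t := by rw [Nat.add_sub_cancel]; exact ht.1
    have ht2 : t < qtop w (r+1) := lt_of_lt_of_le ht.2 (min_le_left _ _)
    have hts : t < α * (r+1) / m - DD α w (r+1) := lt_of_lt_of_le ht.2 (min_le_right _ _)
    have hstrict : DD α w (r+1) < α * (r+1) / m - t := by
      have : ((r:ℝ) + 1) = ((r+1 : ℕ) : ℝ) := by push_cast; ring
      linarith [hts]
    have hD : DD α w (r+1) < α * ((r+1 : ℕ) : ℝ) / m - t := by
      have : ((r+1 : ℕ) : ℝ) = (r:ℝ) + 1 := by push_cast; ring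
      rw [this]; linarith [hts]
    refine ⟨slot_event_of_strict hw h1 h2 ht1 ht2 hD, ?_, ?_⟩
    · have := (qq_mem01 hw hw01 (by omega : r ≤ m - 1)).1
      linarith [ht.1]
    · have := qtop_le_one hw hw01 h2
      linarith [ht2]
  -- (3) pairwise disjoint
  have hdisj : ∀ r s : ℕ, r < s → s < m → Disjoint (U r) (U s) := by
    intro r s hrs hsm
    rw [Set.disjoint_left]
    intro t htr hts
    have h1 : t < qtop w (r+1) := lt_of_lt_of_le htr.2 (min_le_left _ _)
    have h2 : qtop w (r+1) = qq w (r+1) := by rw [qtop, if_neg (by omega : ¬(r+1 = m))]; rfl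
    have h3 : qq w (r+1) ≤ qq w s := qq_mono hw hw01 (by omega) (by omega)
    have h4 : qq w s < t := hts.1
    linarith [h1, h2 ▸ h1]
  -- (2) A ⊆ ⋃ V ∪ bad
  have hAV : A ⊆ (⋃ r ∈ Finset.range m, V r) ∪ (Set.range w ∪ {0, 1}) := by
    intro t ht
    obtain ⟨hev, ht0, ht1⟩ := ht
    rcases eq_or_lt_of_le ht0 with rfl | ht0'
    · exact Or.inr (Or.inr (Or.inl rfl))
    rcases eq_or_lt_of_le ht1 with rfl | ht1'
    · exact Or.inr (Or.inr (Or.inr rfl))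
    -- t ∈ Ioo 0 1
    set r' : ℕ := cnt w t + 1 with hr'
    have hr'1 : 1 ≤ r' := le_add_self
    have hr'm : r' ≤ m := by
      have := cnt_le_card w t
      rw [card_ne] at this
      omega
    have hqle : qq w (r'-1) ≤ t := by
      rw [Nat.add_sub_cancel]
      rcases Nat.eq_zero_or_pos (cnt w t) with h | h
      · rw [h, qq_zero]; exact le_of_lt ht0'
      · exact (qq_le_cnt_iff hw h (by omega) t).mpr (le_refl _)
    have hqlt : t < qtop w r' := by
      rcases eq_or_ne r' m with h | h
      · rw [qtop, if_pos h]; exact ht1'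
      · rw [qtop, if_neg h]
        by_contra hc
        push_neg at hc
        have := (qq_le_cnt_iff hw hr'1 (by omega) t).mp hc
        omega
    rcases eq_or_lt_of_le hqle with heq | hlt
    · -- t is one of the w-values (or 0)
      rcases Nat.eq_zero_or_pos (r'-1) with h | h
      · rw [h, qq_zero] at heq
        exact absurd heq.symm (ne_of_gt ht0')
      · obtain ⟨j, _, hj⟩ := qq_eq_w hw h (by omega)
        exact Or.inr (Or.inl ⟨j, by rw [← hj, ← heq]⟩)
    · -- t is in the open slot r'
      have hweak := slot_weak_of_event hw hr'1 hr'm hlt hqlt hev.1 hev.2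
      obtain ⟨r, hr⟩ : ∃ r, r + 1 = r' := ⟨r'-1, by omega⟩
      rw [← hr] at hlt hqlt hweak hr'm
      rw [Nat.add_sub_cancel] at hlt
      refine Or.inl (Set.mem_biUnion (Finset.mem_range.mpr (by omega : r < m)) ?_)
      refine ⟨le_of_lt hlt, le_min (le_of_lt hqlt) ?_⟩
      have hcast : ((r+1 : ℕ) : ℝ) = (r : ℝ) + 1 := by push_cast; ring
      rw [hcast] at hweak
      exact hweak
  -- measures of the pieces
  have hUvol : ∀ r, volume (U r) = ENNReal.ofReal (max 0 (δ r)) := by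
    intro r
    rw [hU, Real.volume_Ioo, ofReal_max_zero]
  have hVvol : ∀ r, volume (V r) = ENNReal.ofReal (max 0 (δ r)) := by
    intro r
    rw [hV, Real.volume_Icc, ofReal_max_zero]
  have hsum : ∑ r ∈ Finset.range m, ENNReal.ofReal (max 0 (δ r)) = ENNReal.ofReal (α / m) := by
    rw [← ENNReal.ofReal_sum_of_nonneg (fun r _ => le_max_left 0 (δ r))]
    congr 1
    exact telescope hw hw01 hm hα1 hα2
  have hbadnull : volume (Set.range w ∪ ({0, 1} : Set ℝ)) = 0 := by
    apply Set.Finite.measure_zero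
    exact (Set.finite_range w).union ((Set.finite_singleton 1).insert 0)
  -- upper bound
  have hup : volume A ≤ ENNReal.ofReal (α / m) := by
    calc volume A ≤ volume ((⋃ r ∈ Finset.range m, V r) ∪ (Set.range w ∪ {0, 1})) :=
          measure_mono hAV
      _ ≤ volume (⋃ r ∈ Finset.range m, V r) + volume (Set.range w ∪ ({0,1} : Set ℝ)) :=
          measure_union_le _ _
      _ = volume (⋃ r ∈ Finset.range m, V r) := by rw [hbadnull, add_zero]
      _ ≤ ∑ r ∈ Finset.range m, volume (V r) := measure_biUnion_finset_le _ _
      _ = ∑ r ∈ Finset.range m, ENNReal.ofReal (max 0 (δ r)) := by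
          exact Finset.sum_congr rfl (fun r _ => hVvol r)
      _ = ENNReal.ofReal (α / m) := hsum
  -- lower bound
  have hlow : ENNReal.ofReal (α / m) ≤ volume A := by
    have hdisj' : (↑(Finset.range m) : Set ℕ).PairwiseDisjoint U := by
      intro r hr s hs hne
      simp only [Finset.coe_range, Set.mem_Iio] at hr hs
      rcases lt_or_gt_of_ne hne with h | h
      · exact hdisj r s h hs
      · exact (hdisj s r h hr).symm
    have hmeas : ∀ r ∈ Finset.range m, MeasurableSet (U r) := fun r _ => by
      rw [hU]; exact measurableSet_Ioo
    calc ENNReal.ofReal (α / m) = ∑ r ∈ Finset.range m, ENNReal.ofReal (max 0 (δ r)) := hsum.symm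
      _ = ∑ r ∈ Finset.range m, volume (U r) :=
          Finset.sum_congr rfl (fun r _ => (hUvol r).symm)
      _ = volume (⋃ r ∈ Finset.range m, U r) := (measure_biUnion_finset hdisj' hmeas).symm
      _ ≤ volume A := measure_mono (Set.iUnion₂_subset
          (fun r hr => hUA r (Finset.mem_range.mp hr)))
  exact le_antisymm hup hlow

end Sec5
section Sec6
variable {m : ℕ} {α : ℝ}

lemma measurable_genOS {k : ℕ} (hk1 : 1 ≤ k) (hk2 : k ≤ m) :
    Measurable (fun v : Fin m → ℝ => genOS v k) := by
  classical
  apply measurable_of_Iic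
  intro c
  have hset : (fun v : Fin m → ℝ => genOS v k) ⁻¹' (Set.Iic c)
      = ⋃ T ∈ (Finset.univ : Finset (Fin m)).powersetCard k, ⋂ j ∈ T,
          {v : Fin m → ℝ | v j ≤ c} := by
    ext v
    simp only [Set.mem_preimage, Set.mem_Iic, Set.mem_iUnion, Set.mem_iInter, Set.mem_setOf_eq]
    rw [← cnt_ge_iff v hk1 (by rwa [Fintype.card_fin]), cnt_ge_iff_exists]
    exact ⟨fun ⟨T, h1, h2⟩ => ⟨T, h1, h2⟩, fun ⟨T, h1, h2⟩ => ⟨T, h1, h2⟩⟩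
  rw [hset]
  apply MeasurableSet.biUnion (Finset.countable_toSet _)
  intro T _
  apply MeasurableSet.biInter (Finset.countable_toSet _)
  intro j _
  exact measurableSet_le (measurable_pi_apply j) measurable_const

lemma measurable_orderStat {k : ℕ} (hk2 : k ≤ m) :
    Measurable (fun v : Fin m → ℝ => orderStat v k) := by
  rcases Nat.eq_zero_or_pos k with rfl | hk1
  · simp only [orderStat, if_pos rfl]
    exact measurable_const
  · simp only [orderStat_eq_genOS]
    exact measurable_genOS hk1 hk2

lemma measurable_slObj {k : ℕ} (hk2 : k ≤ m) :
    Measurable (fun v : Fin m → ℝ => slObj α v k) :=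
  measurable_const.sub (measurable_orderStat hk2)

/-- The set of `v` for which `k` is a maximizer. -/
def MaxSet (α : ℝ) (m : ℕ) (k : ℕ) : Set (Fin m → ℝ) :=
  {v | ∀ j ≤ m, slObj α v j ≤ slObj α v k}

lemma measurable_MaxSet {k : ℕ} (hk2 : k ≤ m) : MeasurableSet (MaxSet α m k) := by
  have : MaxSet α m k = ⋂ j ∈ Finset.range (m+1), {v : Fin m → ℝ | slObj α v j ≤ slObj α v k} := by
    ext v
    simp only [MaxSet, Set.mem_setOf_eq, Set.mem_iInter, Finset.mem_range, Nat.lt_succ_iff]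
  rw [this]
  apply MeasurableSet.biInter (Finset.countable_toSet _)
  intro j hj
  exact measurableSet_le (measurable_slObj (Nat.lt_succ_iff.mp (Finset.mem_range.mp hj)))
    (measurable_slObj hk2)

def RSet (α : ℝ) (m : ℕ) (k : ℕ) : Set (Fin m → ℝ) :=
  MaxSet α m k ∩ ⋂ k' ∈ Finset.Icc (k+1) m, (MaxSet α m k')ᶜ

lemma measurable_RSet {k : ℕ} (hk2 : k ≤ m) : MeasurableSet (RSet α m k) := by
  apply (measurable_MaxSet hk2).inter
  apply MeasurableSet.biInter (Finset.countable_toSet _)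
  intro k' hk'
  exact (measurable_MaxSet (Finset.mem_Icc.mp hk').2).compl

lemma slR_eq_iff {v : Fin m → ℝ} {k : ℕ} (hk2 : k ≤ m) :
    slR α v = k ↔ v ∈ RSet α m k := by
  constructor
  · intro h
    have hmem := slR_mem α v
    rw [h] at hmem
    refine ⟨hmem.2, ?_⟩
    simp only [Set.mem_iInter, Set.mem_compl_iff]
    intro k' hk' hmax
    obtain ⟨h1, h2⟩ := Finset.mem_Icc.mp hk'
    have : k' ≤ slR α v := le_csSup (slSet_bddAbove α v) ⟨h2, hmax⟩
    omega
  · rintro ⟨hmax, hnot⟩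
    simp only [Set.mem_iInter, Set.mem_compl_iff] at hnot
    have hk_mem : k ∈ slSet α v := ⟨hk2, hmax⟩
    have hle : k ≤ slR α v := le_csSup (slSet_bddAbove α v) hk_mem
    have hmem := slR_mem α v
    rcases eq_or_lt_of_le hle with h | h
    · exact h.symm
    · exfalso
      exact hnot (slR α v) (Finset.mem_Icc.mpr ⟨h, hmem.1⟩) hmem.2

/-- The boundary event for coordinate `i`. -/
def ESet (α : ℝ) (m : ℕ) (i : Fin m) : Set (Fin m → ℝ) :=
  {v | 1 ≤ slR α v ∧ v i = slTau α v}

lemma ESet_eq (i : Fin m) : ESet α m i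
    = ⋃ k ∈ Finset.Icc 1 m, (RSet α m k ∩ {v : Fin m → ℝ | v i = orderStat v k}) := by
  ext v
  simp only [ESet, Set.mem_setOf_eq, Set.mem_iUnion, Set.mem_inter_iff, Finset.mem_Icc]
  constructor
  · rintro ⟨h1, h2⟩
    have hmem := slR_mem α v
    refine ⟨slR α v, ⟨h1, hmem.1⟩, (slR_eq_iff hmem.1).mp rfl, ?_⟩
    rw [h2, slTau]
  · rintro ⟨k, ⟨hk1, hk2⟩, hR, hTau⟩
    have hRk : slR α v = k := (slR_eq_iff hk2).mpr hR
    constructor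
    · omega
    · rw [slTau, hRk]
      exact hTau

lemma measurable_ESet (i : Fin m) : MeasurableSet (ESet α m i) := by
  rw [ESet_eq]
  apply MeasurableSet.biUnion (Finset.countable_toSet _)
  intro k hk
  obtain ⟨hk1, hk2⟩ := Finset.mem_Icc.mp hk
  exact (measurable_RSet hk2).inter
    (measurableSet_eq_fun (measurable_pi_apply i) (measurable_orderStat hk2))

end Sec6
section Sec7
variable {ι : Type*} [Fintype ι] [DecidableEq ι]

noncomputable def expandG (i₀ : ι) (q : {j : ι // j ≠ i₀} → ℝ) (t : ℝ) : ι → ℝ :=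
  fun j => if h : j = i₀ then t else q ⟨j, h⟩

lemma expand_eq_expandG {m : ℕ} (i : Fin m) (w : {j : Fin m // j ≠ i} → ℝ) (t : ℝ) :
    expand i w t = expandG i w t := rfl

instance uniqueEqSub (i₀ : ι) : Unique {j : ι // ¬ j ≠ i₀} where
  default := ⟨i₀, not_not_intro rfl⟩
  uniq := fun a => Subtype.ext (not_not.mp a.2)

lemma measurable_expandG (i₀ : ι) :
    Measurable (fun x : ({j : ι // j ≠ i₀} → ℝ) × ℝ => expandG i₀ x.1 x.2) := by
  apply measurable_pi_lambda
  intro j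
  by_cases h : j = i₀
  · simp only [expandG, dif_pos h]
    exact measurable_snd
  · simp only [expandG, dif_neg h]
    exact (measurable_pi_apply (⟨j, h⟩ : {j : ι // j ≠ i₀})).comp measurable_fst

lemma pi_split (μs : ι → Measure ℝ) [∀ j, IsProbabilityMeasure (μs j)] (i₀ : ι)
    {S : Set (ι → ℝ)} (hS : MeasurableSet S) :
    Measure.pi μs S
      = ((Measure.pi (fun j : {j : ι // j ≠ i₀} => μs j)).prod (μs i₀))
          {x : ({j : ι // j ≠ i₀} → ℝ) × ℝ | expandG i₀ x.1 x.2 ∈ S} := by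
  classical
  set e1 := MeasurableEquiv.piEquivPiSubtypeProd (fun _ : ι => ℝ) (fun j => j ≠ i₀) with he1
  set e2 := MeasurableEquiv.piUnique (fun _ : {j : ι // ¬ j ≠ i₀} => ℝ) with he2
  have mp1 := MeasureTheory.measurePreserving_piEquivPiSubtypeProd μs (fun j => j ≠ i₀)
  have mp2 := MeasureTheory.measurePreserving_piUnique (fun j : {j : ι // ¬ j ≠ i₀} => μs j)
  have mp3 := (MeasurePreserving.id (Measure.pi (fun j : {j : ι // j ≠ i₀} => μs j))).prod mp2
  have mp : MeasurePreserving (fun v : ι → ℝ => Prod.map id (⇑e2) (e1 v)) (Measure.pi μs)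
      ((Measure.pi (fun j : {j : ι // j ≠ i₀} => μs j)).prod (μs i₀)) := mp3.comp mp1
  set T := {x : ({j : ι // j ≠ i₀} → ℝ) × ℝ | expandG i₀ x.1 x.2 ∈ S} with hT
  have hTmeas : MeasurableSet T := (measurable_expandG i₀) hS
  have hpre : (fun v : ι → ℝ => Prod.map id (⇑e2) (e1 v)) ⁻¹' T = S := by
    ext v
    simp only [Set.mem_preimage, hT, Set.mem_setOf_eq]
    have : expandG i₀ (Prod.map id (⇑e2) (e1 v)).1 (Prod.map id (⇑e2) (e1 v)).2 = v := by
      funext j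
      by_cases h : j = i₀
      · simp only [expandG, dif_pos h]
        subst h
        rfl
      · simp only [expandG, dif_neg h]
        rfl
    rw [this]
  rw [← hpre, ← mp.measure_preimage hTmeas.nullMeasurableSet]

lemma pi_slice (μs : ι → Measure ℝ) [∀ j, IsProbabilityMeasure (μs j)] (i₀ : ι)
    {S : Set (ι → ℝ)} (hS : MeasurableSet S) :
    Measure.pi μs S
      = ∫⁻ q, (μs i₀) {t : ℝ | expandG i₀ q t ∈ S}
          ∂(Measure.pi (fun j : {j : ι // j ≠ i₀} => μs j)) := by
  rw [pi_split μs i₀ hS]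
  have hpre : {x : ({j : ι // j ≠ i₀} → ℝ) × ℝ | expandG i₀ x.1 x.2 ∈ S}
      = (fun x : ({j : ι // j ≠ i₀} → ℝ) × ℝ => expandG i₀ x.1 x.2) ⁻¹' S := rfl
  rw [hpre, Measure.prod_apply ((measurable_expandG i₀) hS)]
  rfl

lemma pi_diag_null (μs : ι → Measure ℝ) [∀ j, IsProbabilityMeasure (μs j)]
    (hatom : ∀ j x, μs j {x} = 0) {j k : ι} (hjk : j ≠ k) :
    Measure.pi μs {v : ι → ℝ | v j = v k} = 0 := by
  have hS : MeasurableSet {v : ι → ℝ | v j = v k} :=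
    measurableSet_eq_fun (measurable_pi_apply j) (measurable_pi_apply k)
  rw [pi_slice μs j hS]
  have hz : ∀ q : {l : ι // l ≠ j} → ℝ,
      (μs j) {t : ℝ | expandG j q t ∈ {v : ι → ℝ | v j = v k}} = 0 := by
    intro q
    show (μs j) {t : ℝ | expandG j q t j = expandG j q t k} = 0
    have h1 : ∀ t : ℝ, expandG j q t j = t := fun t => dif_pos rfl
    have h2 : ∀ t : ℝ, expandG j q t k = q ⟨k, Ne.symm hjk⟩ := fun t => dif_neg (Ne.symm hjk)
    have heq : {t : ℝ | expandG j q t j = expandG j q t k} = {q ⟨k, Ne.symm hjk⟩} := by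
      ext t
      simp only [Set.mem_setOf_eq, Set.mem_singleton_iff, h1, h2]
    rw [heq]
    exact hatom j _
  simp only [hz]
  exact lintegral_zero

lemma pi_coord_null (μs : ι → Measure ℝ) [∀ j, IsProbabilityMeasure (μs j)] (i₀ : ι)
    {B : Set ℝ} (hB : MeasurableSet B) (h0 : μs i₀ B = 0) :
    Measure.pi μs {v : ι → ℝ | v i₀ ∈ B} = 0 := by
  have hS : MeasurableSet {v : ι → ℝ | v i₀ ∈ B} := (measurable_pi_apply i₀) hB
  rw [pi_slice μs i₀ hS]
  have hz : ∀ q : {l : ι // l ≠ i₀} → ℝ,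
      (μs i₀) {t : ℝ | expandG i₀ q t ∈ {v : ι → ℝ | v i₀ ∈ B}} = 0 := by
    intro q
    show (μs i₀) {t : ℝ | expandG i₀ q t i₀ ∈ B} = 0
    have h1 : ∀ t : ℝ, expandG i₀ q t i₀ = t := fun t => dif_pos rfl
    have heq : {t : ℝ | expandG i₀ q t i₀ ∈ B} = B := by
      ext t
      rw [Set.mem_setOf_eq, h1]
    rw [heq]
    exact h0
  simp only [hz]
  exact lintegral_zero

end Sec7
section Sec8

lemma pi_ESet {m : ℕ} (hm : 0 < m) {α : ℝ} (hα1 : 0 < α) (hα2 : α < 1)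
    (μs : Fin m → Measure ℝ) [∀ j, IsProbabilityMeasure (μs j)]
    (hatom : ∀ j x, μs j {x} = 0) (hIoo : ∀ j, μs j (Set.Ioo (0:ℝ) 1)ᶜ = 0)
    (i : Fin m) (hunif : μs i = (volume : Measure ℝ).restrict (Set.Icc 0 1)) :
    Measure.pi μs (ESet α m i) = ENNReal.ofReal (α / m) := by
  classical
  rw [pi_slice μs i (measurable_ESet i)]
  set ν := Measure.pi (fun j : {j : Fin m // j ≠ i} => μs j) with hν
  have hGnull : ν {q : {j : Fin m // j ≠ i} → ℝ |
      ¬ (Function.Injective q ∧ ∀ j, q j ∈ Set.Ioo (0:ℝ) 1)} = 0 := by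
    apply measure_mono_null (t := (⋃ (j : {j : Fin m // j ≠ i}) (k : {j : Fin m // j ≠ i})
        (_ : j ≠ k), {q : {j : Fin m // j ≠ i} → ℝ | q j = q k})
      ∪ ⋃ (j : {j : Fin m // j ≠ i}), {q : {j : Fin m // j ≠ i} → ℝ | q j ∈ (Set.Ioo (0:ℝ) 1)ᶜ})
    · intro q hq
      simp only [Set.mem_setOf_eq, not_and_or, not_forall] at hq
      rcases hq with h | h
      · obtain ⟨a, b, hab, hne⟩ := Function.not_injective_iff.mp h
        exact Or.inl (Set.mem_iUnion.mpr ⟨a, Set.mem_iUnion.mpr ⟨b, Set.mem_iUnion.mpr ⟨hne, hab⟩⟩⟩)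
      · obtain ⟨j, hj⟩ := h
        exact Or.inr (Set.mem_iUnion.mpr ⟨j, hj⟩)
    · apply measure_union_null
      · apply measure_iUnion_null
        intro j
        apply measure_iUnion_null
        intro k
        apply measure_iUnion_null
        intro hjk
        exact pi_diag_null (fun l : {j : Fin m // j ≠ i} => μs ↑l) (fun l x => hatom ↑l x) hjk
      · apply measure_iUnion_null
        intro j
        exact pi_coord_null (fun l : {j : Fin m // j ≠ i} => μs ↑l) j measurableSet_Ioo.compl (hIoo ↑j)
  have hae : ∀ᵐ q ∂ν, Function.Injective q ∧ ∀ j, q j ∈ Set.Ioo (0:ℝ) 1 := by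
    rw [MeasureTheory.ae_iff]
    exact hGnull
  have hcong : ∫⁻ q, (μs i) {t : ℝ | expandG i q t ∈ ESet α m i} ∂ν
      = ∫⁻ _, ENNReal.ofReal (α / m) ∂ν := by
    apply lintegral_congr_ae
    filter_upwards [hae] with q hq
    have hmeas_t : Measurable (fun t : ℝ => expandG i q t) :=
      (measurable_expandG i).comp (measurable_const.prodMk measurable_id)
    have hsetmeas : MeasurableSet {t : ℝ | expandG i q t ∈ ESet α m i} :=
      hmeas_t (measurable_ESet i)
    rw [hunif, Measure.restrict_apply hsetmeas]
    have : {t : ℝ | expandG i q t ∈ ESet α m i}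
        = {t : ℝ | 1 ≤ slR α (expand i q t) ∧ expand i q t i = slTau α (expand i q t)} := rfl
    rw [this]
    exact core_slice hm hα1 hα2 hq.1 hq.2
  rw [hcong, lintegral_const, measure_univ, mul_one]

end Sec8

/-- Exact boundary FDR of the support-line procedure.  For independent
p-values in `[0,1]` with atomless distributions, the true nulls being `Uniform(0,1)`,
the probability that at least one rejection is made and that the boundary rejection
(the largest rejected p-value) belongs to a true null is exactly `(m₀/m) α`. -/
theorem stmt8
    {Ω : Type} [MeasurableSpace Ω] (μ : Measure Ω) [IsProbabilityMeasure μ]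
    (m : ℕ) (hm : 0 < m)
    (p : Fin m → Ω → ℝ) (hp : ∀ i, Measurable (p i))
    (hrange : ∀ i ω, p i ω ∈ Icc (0 : ℝ) 1)
    (hindep : iIndepFun p μ)
    (hatomless : ∀ i (x : ℝ), μ {ω | p i ω = x} = 0)
    (H0 : Finset (Fin m))
    (hnull : ∀ i ∈ H0, Measure.map (p i) μ = (volume : Measure ℝ).restrict (Icc 0 1))
    (α : ℝ) (hα : α ∈ Ioo (0 : ℝ) 1) :
    (μ {ω | 1 ≤ slR α (fun i => p i ω) ∧
        ∃ i ∈ H0, p i ω = slTau α (fun i => p i ω)}).toReal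
      = (H0.card : ℝ) / m * α := by
  classical
  obtain ⟨hα1, hα2⟩ := hα
  set μs : Fin m → Measure ℝ := fun i => Measure.map (p i) μ with hμs
  haveI : ∀ i, IsProbabilityMeasure (μs i) :=
    fun i => Measure.isProbabilityMeasure_map (hp i).aemeasurable
  have hatom : ∀ j x, μs j {x} = 0 := by
    intro j x
    rw [hμs, Measure.map_apply (hp j) (measurableSet_singleton x)]
    have : p j ⁻¹' {x} = {ω | p j ω = x} := by ext ω; simp
    rw [this]
    exact hatomless j x
  have hIoo : ∀ j, μs j (Set.Ioo (0:ℝ) 1)ᶜ = 0 := by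
    intro j
    rw [hμs, Measure.map_apply (hp j) measurableSet_Ioo.compl]
    apply measure_mono_null (t := {ω | p j ω = 0} ∪ {ω | p j ω = 1})
    · intro ω hω
      simp only [Set.mem_preimage, Set.mem_compl_iff, Set.mem_Ioo, not_and_or, not_lt] at hω
      have hr := hrange j ω
      rcases hω with h | h
      · exact Or.inl (le_antisymm h hr.1)
      · exact Or.inr (le_antisymm hr.2 h)
    · exact measure_union_null (hatomless j 0) (hatomless j 1)
  set X : Ω → (Fin m → ℝ) := fun ω i => p i ω with hX
  have hXmeas : Measurable X := measurable_pi_lambda _ (fun i => hp i)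
  have hmap : Measure.map X μ = Measure.pi μs := by
    refine (Measure.pi_eq fun s hs => ?_).symm
    rw [Measure.map_apply hXmeas (MeasurableSet.univ_pi hs)]
    have hpre : X ⁻¹' (Set.univ.pi s) = ⋂ i ∈ Finset.univ, (p i) ⁻¹' (s i) := by
      ext ω
      simp [Set.mem_pi, hX]
    rw [hpre, hindep.measure_inter_preimage_eq_mul Finset.univ (fun i _ => hs i)]
    exact Finset.prod_congr rfl fun i _ => (Measure.map_apply (hp i) (hs i)).symm
  set GSet : Set (Fin m → ℝ) := ⋃ i ∈ H0, ESet α m i with hGSet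
  have hGmeas : MeasurableSet GSet :=
    MeasurableSet.biUnion (Finset.countable_toSet H0) (fun i _ => measurable_ESet i)
  have hsetEq : {ω | 1 ≤ slR α (fun i => p i ω) ∧
      ∃ i ∈ H0, p i ω = slTau α (fun i => p i ω)} = X ⁻¹' GSet := by
    ext ω
    simp only [Set.mem_setOf_eq, Set.mem_preimage, hGSet, Set.mem_iUnion, ESet]
    constructor
    · rintro ⟨h1, i, hi, h2⟩
      exact ⟨i, hi, h1, h2⟩
    · rintro ⟨i, hi, h1, h2⟩
      exact ⟨h1, i, hi, h2⟩
  have hμG : μ {ω | 1 ≤ slR α (fun i => p i ω) ∧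
      ∃ i ∈ H0, p i ω = slTau α (fun i => p i ω)} = Measure.pi μs GSet := by
    rw [hsetEq, ← hmap, Measure.map_apply hXmeas hGmeas]
  have hdisj : (↑H0 : Set (Fin m)).Pairwise
      (Function.onFun (MeasureTheory.AEDisjoint (Measure.pi μs)) (fun i => ESet α m i)) := by
    intro i _ j _ hij
    apply measure_mono_null (t := {v : Fin m → ℝ | v i = v j})
    · rintro v ⟨⟨_, hvi⟩, ⟨_, hvj⟩⟩
      rw [Set.mem_setOf_eq, hvi, hvj]
    · exact pi_diag_null μs hatom hij
  have hsum : Measure.pi μs GSet = ∑ i ∈ H0, Measure.pi μs (ESet α m i) := by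
    rw [hGSet]
    exact measure_biUnion_finset₀ hdisj (fun i _ => (measurable_ESet i).nullMeasurableSet)
  have hval : ∀ i ∈ H0, Measure.pi μs (ESet α m i) = ENNReal.ofReal (α / m) := by
    intro i hi
    exact pi_ESet hm hα1 hα2 μs hatom hIoo i (hnull i hi)
  rw [hμG, hsum, Finset.sum_congr rfl hval, Finset.sum_const, nsmul_eq_mul,
    ENNReal.toReal_mul, ENNReal.toReal_natCast, ENNReal.toReal_ofReal (by positivity)]
  ring
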